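/- Hopf lemma for the Laplacian on a ball: let B ⊂ ℝⁿ be an open ball, u ∈ C²(B) ∩ C(closure B) with Δu ≥ 0 in B, u < m in B, and u(y) = m at a boundary point y ∈ ∂B at which u is differentiable. Then the outward normal derivative of u at y is strictly positive. -/

import Mathlib

open Metric Filter Topology
open scoped RealInnerProductSpace

/-- The Laplacian of `u` at `x`, as the trace of the second derivative. -/
noncomputable def laplacian (n : ℕ) (u : EuclideanSpace ℝ (Fin n) → ℝ)
    (x : EuclideanSpace ℝ (Fin n)) : ℝ :=
  ∑ i : Fin n, iteratedFDeriv ℝ 2 u x ![EuclideanSpace.single i 1, EuclideanSpace.single i 1]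

section General
variable {E : Type*} [NormedAddCommGroup E] [NormedSpace ℝ E]
variable {E : Type*} [NormedAddCommGroup E] [NormedSpace ℝ E]

lemma lineDeriv_aux {f : E → ℝ} {U : Set E} (hU : IsOpen U)
    (hf : ContDiffOn ℝ 2 f U) {x : E} (v : E) {t : ℝ}
    (ht : x + t • v ∈ U) :
    HasDerivAt (fun s : ℝ => f (x + s • v)) (fderiv ℝ f (x + t • v) v) t := by
  have hdiff : DifferentiableAt ℝ f (x + t • v) :=
    (hf.differentiableOn (by norm_num)).differentiableAt (hU.mem_nhds ht)
  have hline : HasDerivAt (fun s : ℝ => x + s • v) v t := by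
    simpa using ((hasDerivAt_id t).smul_const v).const_add x
  exact (hdiff.hasFDerivAt.comp_hasDerivAt t hline)

lemma lineDeriv2_aux {f : E → ℝ} {U : Set E} (hU : IsOpen U)
    (hf : ContDiffOn ℝ 2 f U) {x : E} (hx : x ∈ U) (v : E) :
    HasDerivAt (fun t : ℝ => fderiv ℝ f (x + t • v) v)
      (iteratedFDeriv ℝ 2 f x ![v, v]) 0 := by
  have hD : DifferentiableAt ℝ (fderiv ℝ f) x :=
    (((hf.fderiv_of_isOpen hU (m := 1) one_add_one_eq_two.le).differentiableOn
      (by norm_num)).differentiableAt (hU.mem_nhds hx))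
  have hline : HasDerivAt (fun s : ℝ => x + s • v) v 0 := by
    simpa using ((hasDerivAt_id (0:ℝ)).smul_const v).const_add x
  have h1 : HasDerivAt (fun t : ℝ => fderiv ℝ f (x + t • v))
      (fderiv ℝ (fderiv ℝ f) x v) 0 := by
    have hD' : HasFDerivAt (fderiv ℝ f) (fderiv ℝ (fderiv ℝ f) x) (x + (0:ℝ) • v) := by
      simpa using hD.hasFDerivAt
    exact hD'.comp_hasDerivAt 0 hline
  have h2 := (ContinuousLinearMap.apply ℝ ℝ v).hasFDerivAt.comp_hasDerivAt 0 h1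
  rw [iteratedFDeriv_two_apply]
  simpa [Function.comp_def] using h2

/-- Second derivative test: at an interior local max, diagonal second derivatives are ≤ 0. -/
lemma secondDeriv_nonpos_of_localMax {f : E → ℝ} {U : Set E} (hU : IsOpen U)
    (hf : ContDiffOn ℝ 2 f U) {x : E} (hx : x ∈ U) (hmax : IsLocalMax f x) (v : E) :
    iteratedFDeriv ℝ 2 f x ![v, v] ≤ 0 := by
  by_contra hc
  push_neg at hc
  set c := iteratedFDeriv ℝ 2 f x ![v, v] with hcdef
  set g' : ℝ → ℝ := fun t => fderiv ℝ f (x + t • v) v with hg'def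
  have hder : HasDerivAt g' c 0 := lineDeriv2_aux hU hf hx v
  have hg'0 : g' 0 = 0 := by
    simp [hg'def, hmax.fderiv_eq_zero]
  -- eventually the slope of g' is positive
  have hslope : Tendsto (slope g' 0) (𝓝[≠] 0) (𝓝 c) :=
    hasDerivAt_iff_tendsto_slope.mp hder
  have hslope' : ∀ᶠ t in 𝓝[≠] (0:ℝ), 0 < slope g' 0 t :=
    hslope.eventually (eventually_gt_nhds hc)
  have hpos : ∀ᶠ t in 𝓝 (0:ℝ), t ∈ Set.Ioi (0:ℝ) → 0 < g' t := by
    rw [← eventually_nhdsWithin_iff]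
    have hmono : 𝓝[Set.Ioi (0:ℝ)] 0 ≤ 𝓝[{(0:ℝ)}ᶜ] 0 :=
      nhdsWithin_mono _ (fun t ht => ne_of_gt ht)
    filter_upwards [hslope'.filter_mono hmono, self_mem_nhdsWithin] with t hst ht
    have : slope g' 0 t = g' t / t := by
      simp [slope_def_field, hg'0]
    rw [this] at hst
    have := mul_pos hst (Set.mem_Ioi.mp ht)
    rwa [div_mul_cancel₀] at this
    exact ne_of_gt ht
  have hlineU : ∀ᶠ t in 𝓝 (0:ℝ), x + t • v ∈ U := by
    have hcont : Continuous (fun t : ℝ => x + t • v) := by continuity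
    exact hcont.continuousAt.preimage_mem_nhds (by simpa using hU.mem_nhds hx)
  have hle : ∀ᶠ t in 𝓝 (0:ℝ), f (x + t • v) ≤ f x := by
    have hcont : Continuous (fun t : ℝ => x + t • v) := by continuity
    have htends : Tendsto (fun t : ℝ => x + t • v) (𝓝 0) (𝓝 x) := by
      have h0 := hcont.continuousAt (x := (0:ℝ))
      unfold ContinuousAt at h0
      simpa using h0
    exact htends.eventually hmax
  obtain ⟨δ, hδpos, hδ⟩ := Metric.eventually_nhds_iff.mp ((hlineU.and hle).and hpos)
  set a := δ / 2 with hadef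
  have hapos : 0 < a := by positivity
  have hmem : ∀ t ∈ Set.Icc (0:ℝ) a, x + t • v ∈ U := by
    intro t ht
    have : dist t 0 < δ := by
      rw [Real.dist_eq, sub_zero, abs_of_nonneg ht.1]
      linarith [ht.2]
    exact ((hδ this).1).1
  have hcontg : ContinuousOn (fun t : ℝ => f (x + t • v)) (Set.Icc 0 a) := by
    intro t ht
    exact ((lineDeriv_aux hU hf v (hmem t ht)).continuousAt).continuousWithinAt
  have hderivpos : ∀ t ∈ interior (Set.Icc (0:ℝ) a),
      0 < deriv (fun s : ℝ => f (x + s • v)) t := by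
    intro t ht
    rw [interior_Icc] at ht
    have hd : dist t 0 < δ := by
      rw [Real.dist_eq, sub_zero, abs_of_nonneg ht.1.le]
      linarith [ht.2]
    have := (hδ hd).2 ht.1
    rwa [(lineDeriv_aux hU hf v ((hδ hd).1.1)).deriv]
  have hmono := strictMonoOn_of_deriv_pos (convex_Icc (0:ℝ) a) hcontg hderivpos
  have h1 : f (x + (0:ℝ) • v) < f (x + a • v) :=
    hmono (Set.left_mem_Icc.mpr hapos.le) (Set.right_mem_Icc.mpr hapos.le) hapos
  have h2 : f (x + a • v) ≤ f x := by
    have : dist a 0 < δ := by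
      rw [Real.dist_eq, sub_zero, abs_of_nonneg hapos.le]
      linarith
    exact ((hδ this).1).2
  simp at h1
  linarith

lemma iter_add_smul {u w : E → ℝ} {U : Set E} (hU : IsOpen U)
    (hu : ContDiffOn ℝ 2 u U) (hw : ContDiff ℝ 2 w) {x : E} (hx : x ∈ U)
    (ε : ℝ) (e : E) :
    iteratedFDeriv ℝ 2 (fun p => u p + ε * w p) x ![e, e]
      = iteratedFDeriv ℝ 2 u x ![e, e] + ε * iteratedFDeriv ℝ 2 w x ![e, e] := by
  have hweps : ContDiff ℝ 2 (fun p => ε * w p) := contDiff_const.mul hw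
  have hv : ContDiffOn ℝ 2 (fun p => u p + ε * w p) U :=
    hu.add hweps.contDiffOn
  have hLv := lineDeriv2_aux hU hv hx e
  have hLu := lineDeriv2_aux hU hu hx e
  have hLw := lineDeriv2_aux isOpen_univ hw.contDiffOn (Set.mem_univ x) e
  have hsum : HasDerivAt
      (fun t : ℝ => fderiv ℝ u (x + t • e) e + ε * fderiv ℝ w (x + t • e) e)
      (iteratedFDeriv ℝ 2 u x ![e, e] + ε * iteratedFDeriv ℝ 2 w x ![e, e]) 0 :=
    hLu.add (hLw.const_mul ε)
  have hUev : ∀ᶠ t in 𝓝 (0:ℝ), x + t • e ∈ U := by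
    have hcont : Continuous (fun t : ℝ => x + t • e) := by continuity
    exact hcont.continuousAt.preimage_mem_nhds (by simpa using hU.mem_nhds hx)
  have heq : (fun t : ℝ => fderiv ℝ (fun p => u p + ε * w p) (x + t • e) e)
      =ᶠ[𝓝 (0:ℝ)] fun t : ℝ => fderiv ℝ u (x + t • e) e + ε * fderiv ℝ w (x + t • e) e := by
    filter_upwards [hUev] with t ht
    have hdu : DifferentiableAt ℝ u (x + t • e) :=
      (hu.differentiableOn (by norm_num)).differentiableAt (hU.mem_nhds ht)
    have hdw : DifferentiableAt ℝ (fun p => ε * w p) (x + t • e) :=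
      hweps.differentiable (by norm_num) _
    rw [fderiv_fun_add hdu hdw]
    have : fderiv ℝ (fun p => ε * w p) (x + t • e) = ε • fderiv ℝ w (x + t • e) := by
      exact fderiv_const_mul (hw.differentiable (by norm_num) _) ε
    simp [this]
  have hLv' := hsum.congr_of_eventuallyEq heq
  exact hLv.unique hLv'

end General

section Inner
variable {E : Type*} [NormedAddCommGroup E] [InnerProductSpace ℝ E]
variable {E : Type*} [NormedAddCommGroup E] [InnerProductSpace ℝ E]

lemma barrier_contDiff (α c : ℝ) (z : E) :
    ContDiff ℝ 2 (fun x : E => Real.exp (-α * ‖x - z‖^2) - c) := by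
  have h1 : ContDiff ℝ 2 (fun x : E => ‖x - z‖^2) := by
    have h0 : ContDiff ℝ 2 (fun x : E => x - z) := contDiff_id.sub contDiff_const
    exact (contDiff_norm_sq ℝ).comp h0
  exact ((Real.contDiff_exp.of_le le_top).comp (h1.const_smul (-α) : ContDiff ℝ 2 fun x : E => -α • ‖x - z‖^2)).sub contDiff_const

lemma barrier_1d {α c s b : ℝ} :
    ∀ t : ℝ, HasDerivAt (fun t : ℝ => Real.exp (-α * (s + 2*b*t + t^2)) - c)
      (Real.exp (-α * (s + 2*b*t + t^2)) * (-α * (2*b + 2*t))) t := by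
  intro t
  have h1 : HasDerivAt (fun t : ℝ => s + 2*b*t + t^2) (2*b + 2*t) t := by
    have ha : HasDerivAt (fun t : ℝ => s + 2*b*t) (2*b) t := by
      simpa using ((hasDerivAt_id t).const_mul (2*b)).const_add s
    have hb : HasDerivAt (fun t : ℝ => t^2) (2*t) t := by
      simpa using hasDerivAt_pow 2 t
    exact ha.add hb
  have h2 := (h1.const_mul (-α)).exp
  simpa [mul_comm] using h2.sub_const c

lemma barrier_iter {z : E} (α c : ℝ) (x : E) {e : E} (he : ‖e‖ = 1) :
    iteratedFDeriv ℝ 2 (fun x : E => Real.exp (-α * ‖x - z‖^2) - c) x ![e, e]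
      = Real.exp (-α * ‖x - z‖^2) * (4*α^2*⟪x - z, e⟫^2 - 2*α) := by
  set w : E → ℝ := fun x => Real.exp (-α * ‖x - z‖^2) - c with hwdef
  set s := ‖x - z‖^2 with hsdef
  set b := ⟪x - z, e⟫ with hbdef
  have hw : ContDiffOn ℝ 2 w Set.univ := (barrier_contDiff α c z).contDiffOn
  have hGeq : ∀ t : ℝ, w (x + t • e) = Real.exp (-α * (s + 2*b*t + t^2)) - c := by
    intro t
    have : ‖x + t • e - z‖^2 = s + 2*b*t + t^2 := by
      have h0 : x + t • e - z = (x - z) + t • e := by abel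
      rw [h0, norm_add_sq_real, real_inner_smul_right, norm_smul]
      simp [hsdef, hbdef, mul_pow, he, abs_sq]
      ring
    simp only [hwdef, this]
  set g' : ℝ → ℝ := fun t => fderiv ℝ w (x + t • e) e with hg'def
  have hL : HasDerivAt g' (iteratedFDeriv ℝ 2 w x ![e, e]) 0 :=
    lineDeriv2_aux isOpen_univ hw (Set.mem_univ x) e
  have hg'eq : g' = fun t => Real.exp (-α * (s + 2*b*t + t^2)) * (-α * (2*b + 2*t)) := by
    funext t
    have ha : HasDerivAt (fun t : ℝ => w (x + t • e)) (g' t) t :=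
      lineDeriv_aux isOpen_univ hw e (Set.mem_univ _)
    have hb2 : HasDerivAt (fun t : ℝ => w (x + t • e))
        (Real.exp (-α * (s + 2*b*t + t^2)) * (-α * (2*b + 2*t))) t := by
      have := barrier_1d (α := α) (c := c) (s := s) (b := b) t
      have heq : (fun t : ℝ => Real.exp (-α * (s + 2*b*t + t^2)) - c)
          = fun t : ℝ => w (x + t • e) := by
        funext t; rw [hGeq t]
      rwa [heq] at this
    exact ha.unique hb2
  -- now compute the derivative of the explicit formula at 0
  have hexp : HasDerivAt (fun t : ℝ => Real.exp (-α * (s + 2*b*t + t^2)))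
      (Real.exp (-α * (s + 2*b*0 + 0^2)) * (-α * (2*b + 2*0))) 0 := by
    have := barrier_1d (α := α) (c := c) (s := s) (b := b) 0
    simpa using this.add_const c
  have hq : HasDerivAt (fun t : ℝ => -α * (2*b + 2*t)) (-α * 2) 0 := by
    simpa using (((hasDerivAt_id (0:ℝ)).const_mul 2).const_add (2*b)).const_mul (-α)
  have hE : HasDerivAt (fun t : ℝ => Real.exp (-α * (s + 2*b*t + t^2)) * (-α * (2*b + 2*t)))
      (Real.exp (-α * s) * (4*α^2*b^2 - 2*α)) 0 := by
    have := hexp.mul hq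
    have harg : -α * (s + 2*b*0 + 0^2) = -α * s := by ring
    rw [harg] at this
    refine this.congr_deriv ?_
    ring
  rw [hg'eq] at hL
  exact hL.unique hE


lemma barrier_fderiv {z : E} (α c : ℝ) (x : E) {e : E} (he : ‖e‖ = 1) :
    fderiv ℝ (fun p : E => Real.exp (-α * ‖p - z‖^2) - c) x e
      = Real.exp (-α * ‖x - z‖^2) * (-α * (2 * ⟪x - z, e⟫)) := by
  set w : E → ℝ := fun p => Real.exp (-α * ‖p - z‖^2) - c with hwdef
  set s := ‖x - z‖^2 with hsdef
  set b := ⟪x - z, e⟫ with hbdef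
  have hw : ContDiffOn ℝ 2 w Set.univ := (barrier_contDiff α c z).contDiffOn
  have hGeq : ∀ t : ℝ, w (x + t • e) = Real.exp (-α * (s + 2*b*t + t^2)) - c := by
    intro t
    have : ‖x + t • e - z‖^2 = s + 2*b*t + t^2 := by
      have h0 : x + t • e - z = (x - z) + t • e := by abel
      rw [h0, norm_add_sq_real, real_inner_smul_right, norm_smul]
      simp [hsdef, hbdef, mul_pow, he, abs_sq]
      ring
    simp only [hwdef, this]
  have ha : HasDerivAt (fun t : ℝ => w (x + t • e)) (fderiv ℝ w x e) 0 := by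
    have := lineDeriv_aux isOpen_univ hw e (x := x) (t := 0) (Set.mem_univ _)
    simpa using this
  have hb2 : HasDerivAt (fun t : ℝ => w (x + t • e))
      (Real.exp (-α * (s + 2*b*0 + 0^2)) * (-α * (2*b + 2*0))) 0 := by
    have h := barrier_1d (α := α) (c := c) (s := s) (b := b) 0
    have heq : (fun t : ℝ => Real.exp (-α * (s + 2*b*t + t^2)) - c)
        = fun t : ℝ => w (x + t • e) := by
      funext t; rw [hGeq t]
    rwa [heq] at h
  have := ha.unique hb2
  rw [this]
  norm_num

end Inner
lemma barrier_laplacian {n : ℕ} (z : EuclideanSpace ℝ (Fin n)) (α c : ℝ)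
    (x : EuclideanSpace ℝ (Fin n)) :
    laplacian n (fun p => Real.exp (-α * ‖p - z‖^2) - c) x
      = Real.exp (-α * ‖x - z‖^2) * (4*α^2*‖x - z‖^2 - 2*α*n) := by
  unfold laplacian
  have h1 : ∀ i : Fin n,
      iteratedFDeriv ℝ 2 (fun p : EuclideanSpace ℝ (Fin n) => Real.exp (-α * ‖p - z‖^2) - c) x
        ![EuclideanSpace.single i 1, EuclideanSpace.single i 1]
      = Real.exp (-α * ‖x - z‖^2) * (4*α^2*((x - z) i)^2 - 2*α) := by
    intro i
    rw [barrier_iter α c x (by simp)]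
    congr 2
    have := EuclideanSpace.inner_single_right (𝕜 := ℝ) i 1 (x - z)
    rw [this]; simp
  rw [Finset.sum_congr rfl (fun i _ => h1 i)]
  have h2 : ∑ i : Fin n, ((x - z) i)^2 = ‖x - z‖^2 := by
    have h3 := real_inner_self_eq_norm_sq (x - z)
    rw [← h3, PiLp.inner_apply]
    simp [pow_two]
  rw [Finset.sum_congr rfl (fun i _ => by ring :
    ∀ i ∈ Finset.univ, Real.exp (-α * ‖x - z‖^2) * (4*α^2*((x - z) i)^2 - 2*α)
      = (Real.exp (-α * ‖x - z‖^2) * 4*α^2) * ((x - z) i)^2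
        - Real.exp (-α * ‖x - z‖^2) * (2*α))]
  rw [Finset.sum_sub_distrib, ← Finset.mul_sum, h2, Finset.sum_const, Finset.card_univ]
  simp
  ring

set_option maxHeartbeats 2000000 in
/-- Hopf lemma for the Laplacian on a ball. -/
theorem hopf_lemma_laplacian (n : ℕ) (z : EuclideanSpace ℝ (Fin n)) (R : ℝ) (hR : 0 < R)
    (u : EuclideanSpace ℝ (Fin n) → ℝ) (m : ℝ)
    (hC2 : ContDiffOn ℝ 2 u (ball z R))
    (hcont : ContinuousOn u (closedBall z R))
    (hsub : ∀ x ∈ ball z R, 0 ≤ laplacian n u x)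
    (hlt : ∀ x ∈ ball z R, u x < m)
    (y : EuclideanSpace ℝ (Fin n)) (hy : y ∈ sphere z R) (huy : u y = m)
    (hdiff : DifferentiableAt ℝ u y) :
    0 < ⟪gradient u y, R⁻¹ • (y - z)⟫ := by
  have hyz : ‖y - z‖ = R := by
    have h := mem_sphere.mp hy
    rwa [dist_eq_norm] at h
  rcases Nat.eq_zero_or_pos n with h0 | hn
  · exfalso
    subst h0
    have hyzz : y = z := PiLp.ext fun i => (Nat.not_lt_zero _ i.isLt).elim
    rw [hyzz] at hyz
    simp at hyz
    linarith
  haveI : Nontrivial (EuclideanSpace ℝ (Fin n)) := by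
    refine ⟨EuclideanSpace.single ⟨0, hn⟩ 1, 0, fun h => ?_⟩
    have h2 := congrArg norm h
    simp at h2
  set r := R / 2 with hrdef
  have hrpos : 0 < r := by positivity
  have hrR : r < R := by rw [hrdef]; linarith
  set α := (2 * (n:ℝ) + 1) / R ^ 2 with hαdef
  have hα : 0 < α := by positivity
  have hαR : α * R ^ 2 = 2 * n + 1 := by
    rw [hαdef]; field_simp
  set c := Real.exp (-α * R^2) with hcdef
  set w : EuclideanSpace ℝ (Fin n) → ℝ := fun p => Real.exp (-α * ‖p - z‖^2) - c with hwdef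
  have hwC : ContDiff ℝ 2 w := barrier_contDiff α c z
  have hwy : w y = 0 := by
    simp only [hwdef, hyz, hcdef, sub_self]
  have hum : ∀ x ∈ closedBall z R, u x ≤ m := by
    have hcl : closure (ball z R) = closedBall z R := closure_ball z hR.ne'
    intro x hx
    have hx' : x ∈ closure (ball z R) := hcl ▸ hx
    exact le_on_closure (f := u) (g := fun _ => m) (fun p hp => (hlt p hp).le)
      (by rw [hcl]; exact hcont) continuousOn_const hx'
  have hsphsub : sphere z r ⊆ ball z R :=
    sphere_subset_closedBall.trans (closedBall_subset_ball hrR)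
  obtain ⟨x₁, hx₁s, hx₁max⟩ := (isCompact_sphere z r).exists_isMaxOn
    (NormedSpace.sphere_nonempty.mpr hrpos.le)
    (hcont.mono (hsphsub.trans ball_subset_closedBall))
  set δ := m - u x₁ with hδdef
  have hδpos : 0 < δ := sub_pos.mpr (hlt _ (hsphsub hx₁s))
  set ε := δ / Real.exp (-α * r^2) with hεdef
  have hεpos : 0 < ε := div_pos hδpos (Real.exp_pos _)
  set v : EuclideanSpace ℝ (Fin n) → ℝ := fun p => u p + ε * w p with hvdef
  have hwle : ∀ x : EuclideanSpace ℝ (Fin n), r ≤ ‖x - z‖ → w x ≤ Real.exp (-α * r^2) := by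
    intro x hx
    have h0 : r^2 ≤ ‖x - z‖^2 := by nlinarith [hrpos, hx]
    have h1 : Real.exp (-α * ‖x - z‖^2) ≤ Real.exp (-α * r^2) :=
      Real.exp_le_exp.mpr (by nlinarith [mul_le_mul_of_nonneg_left h0 hα.le])
    have h2 : 0 < c := Real.exp_pos _
    simp only [hwdef]
    linarith
  set K := closedBall z R \ ball z r with hKdef
  have hKsub : K ⊆ closedBall z R := Set.diff_subset
  have hKco : IsCompact K := (isCompact_closedBall z R).diff isOpen_ball
  have hyK : y ∈ K := by
    constructor
    · rw [mem_closedBall, dist_eq_norm, hyz]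
    · rw [mem_ball, dist_eq_norm, hyz]
      intro h; linarith
  have hvcont : ContinuousOn v K :=
    (hcont.mono hKsub).add ((continuous_const.mul hwC.continuous).continuousOn)
  obtain ⟨x₀, hx₀K, hx₀max⟩ := hKco.exists_isMaxOn ⟨y, hyK⟩ hvcont
  have hKnorm : r ≤ ‖x₀ - z‖ ∧ ‖x₀ - z‖ ≤ R := by
    obtain ⟨h1, h2⟩ := hx₀K
    rw [mem_closedBall, dist_eq_norm] at h1
    rw [mem_ball, dist_eq_norm, not_lt] at h2
    exact ⟨h2, h1⟩
  have hvC : ContDiffOn ℝ 2 v (ball z R) :=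
    hC2.add ((contDiff_const.mul hwC).contDiffOn)
  have hAsubK : ball z R \ closedBall z r ⊆ K := by
    intro p hp
    exact ⟨ball_subset_closedBall hp.1, fun h => hp.2 (ball_subset_closedBall h)⟩
  have hvx₀ : v x₀ ≤ m := by
    rcases eq_or_lt_of_le hKnorm.1 with heq1 | hlt1
    · -- on inner sphere
      have hx₀s : x₀ ∈ sphere z r := by
        rw [mem_sphere, dist_eq_norm, ← heq1]
      have h1 : u x₀ ≤ u x₁ := hx₁max hx₀s
      have h2 : w x₀ ≤ Real.exp (-α * r^2) := hwle x₀ hKnorm.1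
      have h3 : ε * Real.exp (-α * r^2) = δ := by
        rw [hεdef]; field_simp
      have h4 : ε * w x₀ ≤ δ := by
        calc ε * w x₀ ≤ ε * Real.exp (-α * r^2) := by
              exact mul_le_mul_of_nonneg_left h2 hεpos.le
          _ = δ := h3
      simp only [hvdef]
      have : u x₁ = m - δ := by rw [hδdef]; ring
      linarith
    rcases eq_or_lt_of_le hKnorm.2 with heq2 | hlt2
    · -- on outer sphere
      have hw0 : w x₀ = 0 := by
        simp only [hwdef, heq2, hcdef, sub_self]
      have : u x₀ ≤ m := hum x₀ (hKsub hx₀K)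
      simp only [hvdef, hw0]
      linarith
    · -- interior point: contradiction with maximum principle
      exfalso
      have hx₀A : x₀ ∈ ball z R \ closedBall z r := by
        constructor
        · rw [mem_ball, dist_eq_norm]; exact hlt2
        · rw [mem_closedBall, dist_eq_norm, not_le]; exact hlt1
      have hx₀ball : x₀ ∈ ball z R := hx₀A.1
      have hA : IsOpen (ball z R \ closedBall z r) := isOpen_ball.sdiff isClosed_closedBall
      have hloc : IsLocalMax v x₀ := by
        filter_upwards [hA.mem_nhds hx₀A] with p hp
        exact hx₀max (hAsubK hp)
      have hneg : ∀ i : Fin n,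
          iteratedFDeriv ℝ 2 v x₀ ![EuclideanSpace.single i 1, EuclideanSpace.single i 1] ≤ 0 :=
        fun i => secondDeriv_nonpos_of_localMax isOpen_ball hvC hx₀ball hloc _
      have hsumneg : laplacian n v x₀ ≤ 0 :=
        Finset.sum_nonpos (fun i _ => hneg i)
      have hadd : laplacian n v x₀ = laplacian n u x₀ + ε * laplacian n w x₀ := by
        unfold laplacian
        rw [Finset.sum_congr rfl
          (fun i _ => iter_add_smul isOpen_ball hC2 hwC hx₀ball ε _)]
        rw [Finset.sum_add_distrib, Finset.mul_sum]
      have hwlap : 0 < laplacian n w x₀ := by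
        rw [hwdef, barrier_laplacian]
        have hs : r^2 ≤ ‖x₀ - z‖^2 := by nlinarith [hKnorm.1, hrpos, norm_nonneg (x₀ - z)]
        have h4r : (4:ℝ) * r^2 = R^2 := by rw [hrdef]; ring
        have hkey : 0 < 4*α^2*‖x₀ - z‖^2 - 2*α*n := by nlinarith
        positivity
      have hul : 0 ≤ laplacian n u x₀ := hsub x₀ hx₀ball
      nlinarith
  have hvK : ∀ p ∈ K, v p ≤ m := fun p hp => (hx₀max hp).trans hvx₀
  have hvy : v y = m := by
    simp only [hvdef, hwy, huy]; ring
  -- the inward direction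
  set d := -(R⁻¹ • (y - z)) with hddef
  have hd1 : ‖d‖ = 1 := by
    rw [hddef, norm_neg, norm_smul, hyz, norm_inv, Real.norm_eq_abs, abs_of_pos hR]
    field_simp
  have hmemK : ∀ t ∈ Set.Icc (0:ℝ) r, y + t • d ∈ K := by
    intro t ht
    have hrepr : y + t • d - z = (1 - t / R) • (y - z) := by
      rw [hddef, div_eq_mul_inv]
      module
    have hnorm : ‖y + t • d - z‖ = R - t := by
      rw [hrepr, norm_smul, hyz, Real.norm_eq_abs, abs_of_nonneg]
      · field_simp
      · have : t / R ≤ 1 := by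
          rw [div_le_one hR]; linarith [ht.2]
        linarith
    constructor
    · rw [mem_closedBall, dist_eq_norm, hnorm]; linarith [ht.1]
    · rw [mem_ball, dist_eq_norm, hnorm, not_lt]
      have := ht.2
      rw [hrdef] at *
      linarith
  have hvdiffy : DifferentiableAt ℝ v y := by
    exact hdiff.add ((hwC.differentiable (by norm_num) y).const_mul ε)
  have hwdiffy : DifferentiableAt ℝ w y := hwC.differentiable (by norm_num) y
  have hline : HasDerivAt (fun t : ℝ => y + t • d) d 0 := by
    simpa using ((hasDerivAt_id (0:ℝ)).smul_const d).const_add y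
  have hφ : HasDerivAt (fun t : ℝ => v (y + t • d)) (fderiv ℝ v y d) 0 := by
    have h' : HasFDerivAt v (fderiv ℝ v y) (y + (0:ℝ) • d) := by
      simpa using hvdiffy.hasFDerivAt
    exact h'.comp_hasDerivAt 0 hline
  have hD0 : fderiv ℝ v y d ≤ 0 := by
    have hslope : Tendsto (slope (fun t : ℝ => v (y + t • d)) 0) (𝓝[>] 0)
        (𝓝 (fderiv ℝ v y d)) :=
      (hasDerivAt_iff_tendsto_slope.mp hφ).mono_left
        (nhdsWithin_mono _ (fun t ht => ne_of_gt ht))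
    refine le_of_tendsto hslope ?_
    filter_upwards [Ioo_mem_nhdsGT_of_mem (Set.left_mem_Ico.mpr hrpos)] with t ht
    have htK : y + t • d ∈ K := hmemK t ⟨ht.1.le, ht.2.le⟩
    have h1 : v (y + t • d) ≤ m := hvK _ htK
    have h2 : v (y + (0:ℝ) • d) = m := by simpa using hvy
    rw [slope_def_field]
    rw [div_nonpos_iff]
    right
    constructor
    · rw [h2]; linarith
    · linarith [ht.1]
  have hfw : fderiv ℝ w y d = Real.exp (-α * R^2) * (2 * α * R) := by
    rw [hwdef, barrier_fderiv α c y hd1]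
    have hin : ⟪y - z, d⟫ = -R := by
      rw [hddef, inner_neg_right, real_inner_smul_right, real_inner_self_eq_norm_sq, hyz,
        pow_two]
      field_simp
    rw [hin, hyz]
    ring
  have hfv : fderiv ℝ v y d = fderiv ℝ u y d + ε * fderiv ℝ w y d := by
    rw [hvdef]
    rw [fderiv_fun_add hdiff (hwdiffy.const_mul ε)]
    have h2 : fderiv ℝ (fun p => ε * w p) y = ε • fderiv ℝ w y :=
      fderiv_const_mul hwdiffy ε
    simp [h2]
  have hud : fderiv ℝ u y d ≤ -(ε * (Real.exp (-α * R^2) * (2 * α * R))) := by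
    rw [hfv, hfw] at hD0
    linarith
  have hgrad : ⟪gradient u y, R⁻¹ • (y - z)⟫ = fderiv ℝ u y (R⁻¹ • (y - z)) := by
    have h1 := hdiff.hasGradientAt.hasFDerivAt
    have h2 := hdiff.hasFDerivAt
    rw [← h1.unique h2]
    exact (InnerProductSpace.toDual_apply_apply).symm
  have hmapneg : fderiv ℝ u y d = -fderiv ℝ u y (R⁻¹ • (y - z)) := by
    rw [hddef, map_neg]
  rw [hgrad]
  have hposq : 0 < ε * (Real.exp (-α * R^2) * (2 * α * R)) := by positivity
  linarith [hud, hmapneg]
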